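/- In the contextual category associated to a model of the theory of substitutions, the connecting morphisms are functorial: q(id_{ft(A)}, A) = id_A, and for composable morphisms g : C → B and f : B → ft_k(A), one has q(f ∘ g, A) = q(f, A) ∘ q(g, A[f]). -/

import Mathlib

universe u

/-- Iterated `ft`, lowering a context of length `k` to one of length `m ≤ k`. -/
def ftLe' {Ctx : ℕ → Type u} (ft : ∀ n, Ctx (n + 1) → Ctx n) :
    ∀ {k m : ℕ}, m ≤ k → Ctx k → Ctx m
  | 0, 0, _, A => A
  | k + 1, m, h, A =>
    if hm : m = k + 1 then cast (congrArg Ctx hm.symm) A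
    else ftLe' ft (by omega) (ft k A)

/-- A model of the partial Horn theory of substitutions `𝕊`: sorts `(ctx, n)` and `(tm, n)`
(with `(ty, n) := (ctx, n+1)`), operations `*`, `ft`, `ty`, variables `v_{n,i}` and full
substitution `subst_{p,n,k}` (a partial operation, represented using `Part`), subject to the
axioms of `𝕊`. -/
structure SubModel : Type (u + 1) where
  Ctx : ℕ → Type u
  Tm : ℕ → Type u
  star : Ctx 0
  ctx_zero_unique : ∀ A : Ctx 0, A = star
  ft : ∀ n, Ctx (n + 1) → Ctx n
  ty : ∀ n, Tm n → Ctx (n + 1)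
  v : ∀ n i, i < n → Ctx n → Tm n
  substTy : ∀ n k, Ctx n → Ctx (k + 1) → (Fin k → Tm n) → Part (Ctx (n + 1))
  substTm : ∀ n k, Ctx n → Tm k → (Fin k → Tm n) → Part (Tm n)
  -- the axioms are stated below, after the auxiliary definitions
  ax_def_substTy : ∀ n k (B : Ctx n) (A : Ctx (k + 1)) (a : Fin k → Tm n),
    (substTy n k B A a).Dom ↔
      ∀ i : Fin k, ty n (a i) ∈ substTy n i B
        (ftLe' ft (Nat.succ_le_of_lt i.isLt) (ft k A))
        (fun j => a (Fin.castLE (le_of_lt i.isLt) j))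
  ax_def_substTm : ∀ n k (B : Ctx n) (b : Tm k) (a : Fin k → Tm n),
    (substTm n k B b a).Dom ↔
      ∀ i : Fin k, ty n (a i) ∈ substTy n i B
        (ftLe' ft (Nat.succ_le_of_lt i.isLt) (ft k (ty k b)))
        (fun j => a (Fin.castLE (le_of_lt i.isLt) j))
  ax_type_var : ∀ n i (h : i < n) (A : Ctx n),
    ty n (v n i h A) ∈ substTy n (n - i - 1) A
      (ftLe' ft (by omega) A)
      (fun j => v n (n - 1 - j) (by omega) A)
  ax_type_substTy : ∀ n k B A a C, C ∈ substTy n k B A a → ft n C = B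
  ax_type_substTm : ∀ n k (B : Ctx n) (b : Tm k) (a : Fin k → Tm n),
    (substTm n k B b a).map (ty n) = substTy n k B (ty k b) a
  ax_subst_var_ty : ∀ n (A : Ctx (n + 1)),
    substTy n n (ft n A) A (fun j => v n (n - 1 - j) (by omega) (ft n A)) = Part.some A
  ax_subst_var_tm : ∀ n (b : Tm n),
    substTm n n (ft n (ty n b)) b
      (fun j => v n (n - 1 - j) (by omega) (ft n (ty n b))) = Part.some b
  ax_var_subst : ∀ n k (B : Ctx n) (A : Ctx k) (a : Fin k → Tm n)
    (_ : ∀ i : Fin k, ty n (a i) ∈ substTy n i B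
        (ftLe' ft (Nat.succ_le_of_lt i.isLt) A)
        (fun j => a (Fin.castLE (le_of_lt i.isLt) j)))
    (i : ℕ) (h : i < k),
    substTm n k B (v k i h A) a = Part.some (a ⟨k - i - 1, by omega⟩)
  ax_subst_subst_tm : ∀ n k m (C : Ctx n) (B : Ctx k) (b : Fin k → Tm n)
    (a : Fin m → Tm k) (t : Tm m)
    (_ : ∀ i : Fin k, ty n (b i) ∈ substTy n i C
        (ftLe' ft (Nat.succ_le_of_lt i.isLt) B)
        (fun j => b (Fin.castLE (le_of_lt i.isLt) j)))
    (_ : ∀ i : Fin m, ty k (a i) ∈ substTy k i B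
        (ftLe' ft (Nat.succ_le_of_lt i.isLt) (ft m (ty m t)))
        (fun j => a (Fin.castLE (le_of_lt i.isLt) j)))
    (s : Tm k) (_ : s ∈ substTm k m B t a)
    (c : Fin m → Tm n) (_ : ∀ i, c i ∈ substTm n k C (a i) b),
    substTm n k C s b = substTm n m C t c
  ax_subst_subst_ty : ∀ n k m (C : Ctx n) (B : Ctx k) (b : Fin k → Tm n)
    (a : Fin m → Tm k) (A : Ctx (m + 1))
    (_ : ∀ i : Fin k, ty n (b i) ∈ substTy n i C
        (ftLe' ft (Nat.succ_le_of_lt i.isLt) B)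
        (fun j => b (Fin.castLE (le_of_lt i.isLt) j)))
    (_ : ∀ i : Fin m, ty k (a i) ∈ substTy k i B
        (ftLe' ft (Nat.succ_le_of_lt i.isLt) (ft m A))
        (fun j => a (Fin.castLE (le_of_lt i.isLt) j)))
    (A' : Ctx (k + 1)) (_ : A' ∈ substTy k m B A a)
    (c : Fin m → Tm n) (_ : ∀ i, c i ∈ substTm n k C (a i) b),
    substTy n k C A' b = substTy n m C A c


namespace SubModel

variable (M : SubModel.{u})

/-- The `Hom` predicate of `𝕊`: the tuple `(a_1, …, a_k)` is a morphism `B → A` of the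
associated category, i.e. each `a_i` has the type obtained by substituting `a_1, …, a_{i-1}`
into the `i`-th component of `A`. -/
def Hom (n k : ℕ) (B : M.Ctx n) (A : M.Ctx k) (a : Fin k → M.Tm n) : Prop :=
  ∀ i : Fin k, M.ty n (a i) ∈ M.substTy n i B
    (ftLe' M.ft (Nat.succ_le_of_lt i.isLt) A)
    (fun j => a (Fin.castLE (le_of_lt i.isLt) j))

/-- The identity morphism `id_A = (v_{n,n-1}(A), …, v_{n,0}(A))`. -/
def idTuple {n : ℕ} (A : M.Ctx n) : Fin n → M.Tm n :=
  fun j => M.v n (n - 1 - j) (by omega) A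

/-- The projection `p_A = (v_{n+1,n}(A), …, v_{n+1,1}(A)) : A → ft(A)`. -/
def pTuple {n : ℕ} (A : M.Ctx (n + 1)) : Fin n → M.Tm (n + 1) :=
  fun j => M.v (n + 1) (n - j) (by omega) A

/-- `f : ft(A) → A` is a section of the projection `p_A`: it is a morphism and
`p_A ∘ f = id_{ft(A)}` (composition is componentwise substitution). -/
def IsSection {k : ℕ} (A : M.Ctx (k + 1)) (f : Fin (k + 1) → M.Tm k) : Prop :=
  M.Hom k (k + 1) (M.ft k A) A f ∧
  ∀ j : Fin k, M.substTm k (k + 1) (M.ft k A) (M.pTuple A j) f =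
    Part.some (M.idTuple (M.ft k A) j)

/-- The map `φ(a) = (v_{k,k-1}(ft A), …, v_{k,0}(ft A), a)`. -/
def phi {k : ℕ} (A : M.Ctx (k + 1)) (a : M.Tm k) : Fin (k + 1) → M.Tm k :=
  fun j => if h : (j : ℕ) < k then M.v k (k - 1 - j) (by omega) (M.ft k A) else a

end SubModel

section FtLeLemmas

variable {Ctx : ℕ → Type u} (ft : ∀ n, Ctx (n + 1) → Ctx n)

theorem ftLe'_refl : ∀ {k} (h : k ≤ k) (A : Ctx k), ftLe' ft h A = A
  | 0, _, _ => rfl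
  | k+1, h, A => by simp [ftLe']

theorem ftLe'_step {k m : ℕ} (h' : m ≤ k+1) (h : m ≤ k) (A : Ctx (k+1)) :
    ftLe' ft h' A = ftLe' ft h (ft k A) := by
  have hm : m ≠ k + 1 := by omega
  simp only [ftLe', dif_neg hm]

theorem ftLe'_trans {k : ℕ} : ∀ {m l : ℕ} (h1 : l ≤ m) (h2 : m ≤ k) (h : l ≤ k) (A : Ctx k),
    ftLe' ft h1 (ftLe' ft h2 A) = ftLe' ft h A := by
  induction k with
  | zero =>
    intro m l h1 h2 h A
    have hm : m = 0 := by omega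
    subst hm
    have hl : l = 0 := by omega
    subst hl
    rfl
  | succ k ih =>
    intro m l h1 h2 h A
    by_cases hm : m = k + 1
    · subst hm
      rw [ftLe'_refl]
    · have h2' : m ≤ k := by omega
      have hl' : l ≤ k := by omega
      rw [ftLe'_step ft h2 h2', ftLe'_step ft h hl', ih h1 h2' hl']

theorem ft_ftLe' {k l : ℕ} (h : l + 1 ≤ k) (h' : l ≤ k) (A : Ctx k) :
    ft l (ftLe' ft h A) = ftLe' ft h' A := by
  rw [← ftLe'_trans ft (Nat.le_succ l) h h' A,
    ftLe'_step ft (Nat.le_succ l) (le_refl l), ftLe'_refl]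

end FtLeLemmas

theorem Part.eq_of_mem_of_eq_some {α : Type u} {p : Part α} {x y : α}
    (e : p = Part.some y) (h : x ∈ p) : x = y := by
  rw [e] at h
  exact Part.mem_some_iff.mp h

namespace SubModel

variable (M : SubModel.{u})

theorem v_congr (n i i' : ℕ) (h : i < n) (h' : i' < n) (A : M.Ctx n) (e : i = i') :
    M.v n i h A = M.v n i' h' A := by subst e; rfl

/-- `ax_type_var`, with the index of the result generalized. -/
theorem type_var' (n i : ℕ) (h : i < n) (A : M.Ctx n) (K : ℕ)
    (hK : K = n - i - 1) (hle : K + 1 ≤ n) :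
    M.ty n (M.v n i h A) ∈ M.substTy n K A (ftLe' M.ft hle A)
      (fun j => M.v n (n - 1 - j) (by omega) A) := by
  subst hK
  exact M.ax_type_var n i h A

/-- `ax_var_subst`, with the index into the tuple generalized. -/
theorem var_subst' (n k : ℕ) (B : M.Ctx n) (A : M.Ctx k) (a : Fin k → M.Tm n)
    (ha : ∀ i : Fin k, M.ty n (a i) ∈ M.substTy n i B
        (ftLe' M.ft (Nat.succ_le_of_lt i.isLt) A)
        (fun j => a (Fin.castLE (le_of_lt i.isLt) j)))
    (i : ℕ) (h : i < k) (j : Fin k) (hj : (j : ℕ) = k - i - 1) :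
    M.substTm n k B (M.v k i h A) a = Part.some (a j) := by
  have e := M.ax_var_subst n k B A a ha i h
  rwa [show (⟨k - i - 1, by omega⟩ : Fin k) = j from Fin.ext hj.symm] at e

/-- The projection tuple `p_A` is a morphism `A → ft A`. -/
theorem pTuple_hom (k : ℕ) (A : M.Ctx (k + 1)) :
    M.Hom (k + 1) k A (M.ft k A) (M.pTuple A) := by
  intro i
  have h2 : (i : ℕ) + 1 ≤ k + 1 := by omega
  have hv := M.type_var' (k + 1) (k - i) (by omega) A i (by omega) h2
  rw [ftLe'_step M.ft h2 (Nat.succ_le_of_lt i.isLt)] at hv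
  exact hv

/-- The connecting tuple `q(g, Af)` is a morphism `Ag → Af`. -/
theorem q_hom (m n : ℕ) (C : M.Ctx m) (Af : M.Ctx (n + 1)) (b : Fin n → M.Tm m)
    (hb : M.Hom m n C (M.ft n Af) b)
    (Ag : M.Ctx (m + 1)) (hAg : Ag ∈ M.substTy m n C Af b)
    (qg : Fin (n + 1) → M.Tm (m + 1))
    (hq : ∀ i : Fin n, qg i.castSucc ∈ M.substTm (m + 1) m Ag (b i) (M.pTuple Ag))
    (hlast : qg (Fin.last n) = M.v (m + 1) 0 (Nat.succ_pos m) Ag) :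
    M.Hom (m + 1) (n + 1) Ag Af qg := by
  have hC : M.ft m Ag = C := M.ax_type_substTy m n C Af b Ag hAg
  have hp : ∀ j : Fin m, M.ty (m + 1) (M.pTuple Ag j) ∈ M.substTy (m + 1) j Ag
      (ftLe' M.ft (Nat.succ_le_of_lt j.isLt) C)
      (fun l => M.pTuple Ag (Fin.castLE (le_of_lt j.isLt) l)) := by
    intro j
    have := M.pTuple_hom m Ag j
    rwa [hC] at this
  intro i
  refine Fin.lastCases ?_ ?_ i
  · -- the last component, the top variable of `Ag`
    have key := M.ax_subst_subst_ty (m + 1) m n Ag C (M.pTuple Ag) b Af hp hb Ag hAg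
      (fun j => qg j.castSucc) hq
    have hv := M.type_var' (m + 1) 0 (by omega) Ag m (by omega) (by omega)
    rw [ftLe'_refl] at hv
    have hv' := key ▸ hv
    show M.ty (m + 1) (qg (Fin.last n)) ∈ M.substTy (m + 1) n Ag
      (ftLe' M.ft (Nat.succ_le_of_lt (Fin.last n).isLt) Af) _
    rw [hlast, ftLe'_refl]
    exact hv'
  · intro i₀
    have hle : (i₀ : ℕ) + 1 ≤ n := Nat.succ_le_of_lt i₀.isLt
    have hyp2 : ∀ j : Fin (i₀ : ℕ), M.ty m (b (Fin.castLE (le_of_lt i₀.isLt) j)) ∈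
        M.substTy m j C
          (ftLe' M.ft (Nat.succ_le_of_lt j.isLt)
            (M.ft (i₀ : ℕ) (ftLe' M.ft hle (M.ft n Af))))
          (fun l => b (Fin.castLE (le_of_lt i₀.isLt)
            (Fin.castLE (le_of_lt j.isLt) l))) := by
      intro j
      rw [ft_ftLe' M.ft hle (le_of_lt i₀.isLt),
        ftLe'_trans M.ft (Nat.succ_le_of_lt j.isLt) (le_of_lt i₀.isLt)
          (by omega : (j : ℕ) + 1 ≤ n)]
      exact hb (Fin.castLE (le_of_lt i₀.isLt) j)
    have key := M.ax_subst_subst_ty (m + 1) m (i₀ : ℕ) Ag C (M.pTuple Ag)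
      (fun j => b (Fin.castLE (le_of_lt i₀.isLt) j)) (ftLe' M.ft hle (M.ft n Af))
      hp hyp2 (M.ty m (b i₀)) (hb i₀)
      (fun j => qg (Fin.castLE (le_of_lt i₀.isLt) j).castSucc)
      (fun j => hq (Fin.castLE (le_of_lt i₀.isLt) j))
    have hmem : M.ty (m + 1) (qg i₀.castSucc) ∈
        M.substTy (m + 1) m Ag (M.ty m (b i₀)) (M.pTuple Ag) := by
      rw [← M.ax_type_substTm (m + 1) m Ag (b i₀) (M.pTuple Ag)]
      exact Part.mem_map (M.ty (m + 1)) (hq i₀)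
    have hv' := key ▸ hmem
    show M.ty (m + 1) (qg i₀.castSucc) ∈ M.substTy (m + 1) (i₀ : ℕ) Ag
      (ftLe' M.ft (Nat.succ_le_of_lt i₀.castSucc.isLt) Af) _
    rw [ftLe'_step M.ft (Nat.succ_le_of_lt i₀.castSucc.isLt) hle]
    exact hv'

end SubModel


/-- In the contextual category `F(M)` associated to a model `M` of the
theory of substitutions, the connecting morphisms are functorial:
`q(id_{ft A}, A) = id_A`, and `q(f ∘ g, A) = q(f, A) ∘ q(g, A[f])` for composable `g : C → B`
and `f : B → ft_k(A)`.  Here `A[f]` is the element of `subst_ty(B, A, f)`, and `q(f, A)` is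
the tuple whose first `k` components are the components of `f` weakened along the projection
of `A[f]` and whose last component is the top variable of `A[f]`; composition of tuples is
componentwise substitution. -/
theorem submodel_q_functorial (M : SubModel.{u}) :
    (∀ (k : ℕ) (A : M.Ctx (k + 1)) (qf : Fin (k + 1) → M.Tm (k + 1)),
      (∀ i : Fin k, qf i.castSucc ∈
        M.substTm (k + 1) k A (M.idTuple (M.ft k A) i) (M.pTuple A)) →
      qf (Fin.last k) = M.v (k + 1) 0 (by omega) A →
      qf = M.idTuple A) ∧
    (∀ (m n k : ℕ) (C : M.Ctx m) (B : M.Ctx n) (A : M.Ctx (k + 1))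
      (b : Fin n → M.Tm m) (_ : M.Hom m n C B b)
      (a : Fin k → M.Tm n) (_ : M.Hom n k B (M.ft k A) a)
      (Af : M.Ctx (n + 1)) (_ : Af ∈ M.substTy n k B A a)
      (qf : Fin (k + 1) → M.Tm (n + 1))
      (_ : ∀ i : Fin k, qf i.castSucc ∈ M.substTm (n + 1) n Af (a i) (M.pTuple Af))
      (_ : qf (Fin.last k) = M.v (n + 1) 0 (by omega) Af)
      (fg : Fin k → M.Tm m) (_ : ∀ i, fg i ∈ M.substTm m n C (a i) b)
      (Afg : M.Ctx (m + 1)) (_ : Afg ∈ M.substTy m k C A fg)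
      (qfg : Fin (k + 1) → M.Tm (m + 1))
      (_ : ∀ i : Fin k, qfg i.castSucc ∈ M.substTm (m + 1) m Afg (fg i) (M.pTuple Afg))
      (_ : qfg (Fin.last k) = M.v (m + 1) 0 (by omega) Afg)
      (Ag : M.Ctx (m + 1)) (_ : Ag ∈ M.substTy m n C Af b)
      (qg : Fin (n + 1) → M.Tm (m + 1))
      (_ : ∀ i : Fin n, qg i.castSucc ∈ M.substTm (m + 1) m Ag (b i) (M.pTuple Ag))
      (_ : qg (Fin.last n) = M.v (m + 1) 0 (by omega) Ag)
      (cc : Fin (k + 1) → M.Tm (m + 1))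
      (_ : ∀ i, cc i ∈ M.substTm (m + 1) (n + 1) Ag (qf i) qg),
      cc = qfg) := by
  constructor
  · -- q(id, A) = id_A
    intro k A qf hqf hlast
    funext i
    refine Fin.lastCases ?_ (fun i₀ => ?_) i
    · rw [hlast]
      exact M.v_congr (k + 1) 0 (k + 1 - 1 - (Fin.last k : ℕ)) (by omega) (by omega) A
        (by simp)
    · have hik := i₀.isLt
      have e := M.var_subst' (k + 1) k A (M.ft k A) (M.pTuple A) (M.pTuple_hom k A)
        (k - 1 - (i₀ : ℕ)) (by omega) i₀ (by omega)
      rw [Part.eq_of_mem_of_eq_some e (hqf i₀)]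
      exact M.v_congr (k + 1) (k - (i₀ : ℕ)) (k + 1 - 1 - (i₀.castSucc : ℕ))
        (by omega) (by omega) A (by simp)
  · -- q(f ∘ g, A) = q(f, A) ∘ q(g, A[f])
    intro m n k C B A b hb a ha Af hAf qf hqf hqflast fg hfg Afg hAfg qfg hqfg hqfglast
      Ag hAg qg hqg hqglast cc hcc
    have hB : M.ft n Af = B := M.ax_type_substTy n k B A a Af hAf
    have hcomp := M.ax_subst_subst_ty m n k C B b a A hb ha Af hAf fg hfg
    have hAgAfg : Ag = Afg := Part.mem_unique (hcomp ▸ hAg) hAfg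
    subst hAgAfg
    have hb' : M.Hom m n C (M.ft n Af) b := by rw [hB]; exact hb
    have hqgHom : M.Hom (m + 1) (n + 1) Ag Af qg :=
      M.q_hom m n C Af b hb' Ag hAg qg hqg hqglast
    have hC : M.ft m Ag = C := M.ax_type_substTy m n C Af b Ag hAg
    funext i
    refine Fin.lastCases ?_ (fun i₀ => ?_) i
    · -- last components
      have e := M.var_subst' (m + 1) (n + 1) Ag Af qg hqgHom 0 (by omega)
        (Fin.last n) (by simp)
      have hcl := hcc (Fin.last k)
      rw [hqflast] at hcl
      rw [Part.eq_of_mem_of_eq_some e hcl, hqglast, hqfglast]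
    · -- earlier components
      have hBa : M.ft n (M.ty n (a i₀)) = B :=
        M.ax_type_substTy n (i₀ : ℕ) B _ _ _ (ha i₀)
      have hftty : M.ft n (M.ty n (a i₀)) = M.ft n Af := hBa.trans hB.symm
      have hpq : ∀ j : Fin n, qg j.castSucc ∈
          M.substTm (m + 1) (n + 1) Ag (M.pTuple Af j) qg := by
        intro j
        have hjlt := j.isLt
        have e := M.var_subst' (m + 1) (n + 1) Ag Af qg hqgHom (n - (j : ℕ))
          (by omega) j.castSucc (by simp only [Fin.coe_castSucc]; omega)
        exact e.symm ▸ Part.mem_some _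
      have hpAf : ∀ j : Fin n, M.ty (n + 1) (M.pTuple Af j) ∈ M.substTy (n + 1) j Af
          (ftLe' M.ft (Nat.succ_le_of_lt j.isLt) (M.ft n (M.ty n (a i₀))))
          (fun l => M.pTuple Af (Fin.castLE (le_of_lt j.isLt) l)) := by
        intro j
        rw [hftty]
        exact M.pTuple_hom n Af j
      have E1 := M.ax_subst_subst_tm (m + 1) (n + 1) n Ag Af qg (M.pTuple Af) (a i₀)
        hqgHom hpAf (qf i₀.castSucc) (hqf i₀) (fun j => qg j.castSucc) hpq
      have hpAg : ∀ j : Fin m, M.ty (m + 1) (M.pTuple Ag j) ∈ M.substTy (m + 1) j Ag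
          (ftLe' M.ft (Nat.succ_le_of_lt j.isLt) C)
          (fun l => M.pTuple Ag (Fin.castLE (le_of_lt j.isLt) l)) := by
        intro j
        rw [← hC]
        exact M.pTuple_hom m Ag j
      have hbty : ∀ j : Fin n, M.ty m (b j) ∈ M.substTy m j C
          (ftLe' M.ft (Nat.succ_le_of_lt j.isLt) (M.ft n (M.ty n (a i₀))))
          (fun l => b (Fin.castLE (le_of_lt j.isLt) l)) := by
        intro j
        rw [hBa]
        exact hb j
      have E2 := M.ax_subst_subst_tm (m + 1) m n Ag C (M.pTuple Ag) b (a i₀)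
        hpAg hbty (fg i₀) (hfg i₀) (fun j => qg j.castSucc) hqg
      have hcl := hcc i₀.castSucc
      rw [E1, ← E2] at hcl
      exact Part.mem_unique hcl (hqfg i₀)
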